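/- Let R be a commutative ring, S a finite set, F a local coefficient system on the Boolean lattice B(S) with values in R-modules, and let ε and ε′ be two sign assignments on B(S). Then the cochain complexes (C^*, d_ε) and (C^*, d_{ε′}) obtained from F using ε and ε′ respectively are isomorphic as cochain complexes of R-modules (there are chain maps in both directions composing to the identity in both orders). -/

import Mathlib

open DirectSum Finset

/-- The cochain group `C^i = ⊕_{A ⊆ S, |A| = i} F(A)` associated to a local
coefficient system `M` on the Boolean lattice of the finite set `S`. -/
abbrev BooleanCochain {R : Type} [CommRing R] {S : Type} [Fintype S] [DecidableEq S]
    (M : Finset S → Type) [∀ A, AddCommGroup (M A)] [∀ A, Module R (M A)] (i : ℕ) : Type :=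
  ⨁ (A : {A : Finset S // A.card = i}), M A.1

/-- The differential `d_ε(v) = Σ_{B covers A} (−1)^{ε(A,B)} d_{A,B}(v)`. -/
noncomputable def booleanDiff {R : Type} [CommRing R] {S : Type} [Fintype S] [DecidableEq S]
    (M : Finset S → Type) [∀ A, AddCommGroup (M A)] [∀ A, Module R (M A)]
    (f : ∀ A B : Finset S, A ⊆ B → (M A →ₗ[R] M B))
    (ε : Finset S → Finset S → ZMod 2) (i : ℕ) :
    BooleanCochain (R := R) M i →ₗ[R] BooleanCochain (R := R) M (i + 1) :=
  DirectSum.toModule R _ _ (fun A =>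
    ∑ c ∈ (A.1ᶜ).attach,
      ((-1 : R) ^ (ε A.1 (insert c.1 A.1)).val) •
        ((DirectSum.lof R {B : Finset S // B.card = i + 1} (fun B => M B.1)
            ⟨insert c.1 A.1, by
              have hc : c.1 ∉ A.1 := Finset.mem_compl.mp c.2
              simp [Finset.card_insert_of_notMem hc, A.2]⟩).comp
          (f A.1 (insert c.1 A.1) (Finset.subset_insert _ _))))

section EtaAux

variable {S : Type} [DecidableEq S] [LinearOrder S]

/-- Potential function built from an edge labelling `δ`, adding maximal elements. -/
noncomputable def booleanEta (δ : Finset S → Finset S → ZMod 2) : Finset S → ZMod 2 :=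
  Finset.strongInduction (fun B ih =>
    if h : B.Nonempty then
      ih (B.erase (B.max' h)) (Finset.erase_ssubset (B.max'_mem h)) +
        δ (B.erase (B.max' h)) B
    else 0)

theorem booleanEta_eq (δ : Finset S → Finset S → ZMod 2) (B : Finset S) (h : B.Nonempty) :
    booleanEta δ B = booleanEta δ (B.erase (B.max' h)) + δ (B.erase (B.max' h)) B := by
  rw [booleanEta, Finset.strongInduction_eq, dif_pos h]

theorem booleanEta_insert (δ : Finset S → Finset S → ZMod 2)
    (hsq : ∀ (A : Finset S) (c₁ c₂ : S), c₁ ∉ A → c₂ ∉ A → c₁ ≠ c₂ →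
      δ A (insert c₁ A) + δ (insert c₁ A) (insert c₂ (insert c₁ A)) +
        δ A (insert c₂ A) + δ (insert c₂ A) (insert c₁ (insert c₂ A)) = 0) :
    ∀ (A : Finset S) (c : S), c ∉ A →
      booleanEta δ (insert c A) = booleanEta δ A + δ A (insert c A) := by
  intro A
  induction A using Finset.strongInduction with
  | _ A ih =>
    intro c hc
    have hne : (insert c A).Nonempty := insert_nonempty _ _
    set m := (insert c A).max' hne with hm
    have hmmem : m ∈ insert c A := (insert c A).max'_mem hne
    by_cases hmc : m = c
    · rw [booleanEta_eq δ (insert c A) hne, ← hm, hmc, Finset.erase_insert hc]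
    · have hmA : m ∈ A := by
        rcases Finset.mem_insert.mp hmmem with h | h
        · exact absurd h hmc
        · exact h
      have hAne : A.Nonempty := ⟨m, hmA⟩
      -- max of A is also m
      have hAmax : A.max' hAne = m := by
        apply le_antisymm
        · exact (insert c A).le_max' _ (Finset.mem_insert_of_mem (A.max'_mem hAne))
        · exact A.le_max' _ hmA
      set A' := A.erase m with hA'
      have hcA' : c ∉ A' := fun h => hc (Finset.mem_of_mem_erase h)
      have hmA' : m ∉ A' := Finset.notMem_erase _ _
      have hAins : insert m A' = A := Finset.insert_erase hmA
      have hErase : (insert c A).erase m = insert c A' := by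
        rw [hA', Finset.erase_insert_of_ne (fun h => hmc h.symm)]
      have hBins : insert m (insert c A') = insert c A := by
        rw [Finset.insert_comm, hAins]
      have h1 : booleanEta δ (insert c A) =
          booleanEta δ (insert c A') + δ (insert c A') (insert c A) := by
        rw [booleanEta_eq δ (insert c A) hne, ← hm, hErase]
      have hA'sub : A' ⊂ A := Finset.erase_ssubset hmA
      have h2 : booleanEta δ (insert c A') = booleanEta δ A' + δ A' (insert c A') :=
        ih A' hA'sub c hcA'
      have h3 : booleanEta δ A = booleanEta δ A' + δ A' A := by
        have := booleanEta_eq δ A hAne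
        rwa [hAmax, ← hA'] at this
      have hcm : c ≠ m := fun h => hmc h.symm
      have hsq' := hsq A' c m hcA' hmA' hcm
      rw [hAins, hBins] at hsq'
      -- hsq' : δ A' (insert c A') + δ (insert c A') (insert c A)
      --        + δ A' A + δ A (insert c A) = 0
      rw [h1, h2, h3]
      have e1 : δ A' A + δ A' A = 0 := CharTwo.add_self_eq_zero _
      have e2 : δ A (insert c A) + δ A (insert c A) = 0 := CharTwo.add_self_eq_zero _
      linear_combination hsq' - e1 - e2

end EtaAux

theorem negone_pow_val_add {R : Type} [CommRing R] (x y : ZMod 2) :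
    ((-1 : R)) ^ ((x + y).val) = (-1) ^ x.val * (-1) ^ y.val := by
  rw [ZMod.val_add, ← pow_add]
  conv_rhs => rw [neg_one_pow_eq_pow_mod_two]

theorem negone_pow_sq {R : Type} [CommRing R] (k : ℕ) : ((-1 : R)) ^ k * (-1) ^ k = 1 := by
  rw [← pow_add]
  exact Even.neg_one_pow ⟨k, rfl⟩

/-- Given a local coefficient system `F` on the Boolean lattice `B(S)` of a finite set `S`
with values in `R`-modules, and two sign assignments `ε`, `ε'`, the resulting cochain
complexes `(C^*, d_ε)` and `(C^*, d_{ε'})` are isomorphic: there are chain maps in both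
directions composing to the identity in both orders. -/
theorem booleanComplex_iso_of_two_signAssignments
    {R : Type} [CommRing R] {S : Type} [Fintype S] [DecidableEq S]
    (M : Finset S → Type) [∀ A, AddCommGroup (M A)] [∀ A, Module R (M A)]
    (f : ∀ A B : Finset S, A ⊆ B → (M A →ₗ[R] M B))
    (f_id : ∀ A, f A A (Finset.Subset.refl A) = LinearMap.id)
    (f_comp : ∀ (A B C : Finset S) (hAB : A ⊆ B) (hBC : B ⊆ C),
      (f B C hBC).comp (f A B hAB) = f A C (hAB.trans hBC))
    (ε ε' : Finset S → Finset S → ZMod 2)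
    (hε : ∀ (A : Finset S) (c₁ c₂ : S), c₁ ∉ A → c₂ ∉ A → c₁ ≠ c₂ →
      ε A (insert c₁ A) + ε (insert c₁ A) (insert c₂ (insert c₁ A)) +
        ε A (insert c₂ A) + ε (insert c₂ A) (insert c₁ (insert c₂ A)) = 1)
    (hε' : ∀ (A : Finset S) (c₁ c₂ : S), c₁ ∉ A → c₂ ∉ A → c₁ ≠ c₂ →
      ε' A (insert c₁ A) + ε' (insert c₁ A) (insert c₂ (insert c₁ A)) +
        ε' A (insert c₂ A) + ε' (insert c₂ A) (insert c₁ (insert c₂ A)) = 1) :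
    ∃ (φ ψ : ∀ i : ℕ, BooleanCochain (R := R) M i →ₗ[R] BooleanCochain (R := R) M i),
      (∀ i : ℕ, (φ (i + 1)).comp (booleanDiff (R := R) M f ε i) =
        (booleanDiff (R := R) M f ε' i).comp (φ i)) ∧
      (∀ i : ℕ, (ψ (i + 1)).comp (booleanDiff (R := R) M f ε' i) =
        (booleanDiff (R := R) M f ε i).comp (ψ i)) ∧
      (∀ i : ℕ, (φ i).comp (ψ i) = LinearMap.id) ∧
      (∀ i : ℕ, (ψ i).comp (φ i) = LinearMap.id) := by
  letI : LinearOrder S := LinearOrder.lift' (Fintype.equivFin S) (Equiv.injective _)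
  set δ : Finset S → Finset S → ZMod 2 := fun A B => ε A B + ε' A B with hδdef
  have htwo : (1 : ZMod 2) + 1 = 0 := by decide
  have hδsq : ∀ (A : Finset S) (c₁ c₂ : S), c₁ ∉ A → c₂ ∉ A → c₁ ≠ c₂ →
      δ A (insert c₁ A) + δ (insert c₁ A) (insert c₂ (insert c₁ A)) +
        δ A (insert c₂ A) + δ (insert c₂ A) (insert c₁ (insert c₂ A)) = 0 := by
    intro A c₁ c₂ h1 h2 h3
    simp only [hδdef]
    linear_combination hε A c₁ c₂ h1 h2 h3 + hε' A c₁ c₂ h1 h2 h3 + htwo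
  have hη := booleanEta_insert δ hδsq
  set η : Finset S → ZMod 2 := booleanEta δ with hηdef
  set Φ : ∀ i : ℕ, BooleanCochain (R := R) M i →ₗ[R] BooleanCochain (R := R) M i :=
    fun i => DirectSum.toModule R _ _ (fun A =>
      ((-1 : R) ^ ((η A.1).val)) •
        DirectSum.lof R {A : Finset S // A.card = i} (fun A => M A.1) A) with hΦ
  have hinv : ∀ i, (Φ i).comp (Φ i) = LinearMap.id := by
    intro i
    apply DirectSum.linearMap_ext
    intro A
    ext v
    simp [hΦ, DirectSum.toModule_lof, smul_smul, negone_pow_sq]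
  have hchain : ∀ (e e2 : Finset S → Finset S → ZMod 2),
      (∀ (A : Finset S) (c : S), c ∉ A →
        e A (insert c A) + η (insert c A) = η A + e2 A (insert c A)) →
      ∀ i : ℕ, (Φ (i + 1)).comp (booleanDiff (R := R) M f e i) =
        (booleanDiff (R := R) M f e2 i).comp (Φ i) := by
    intro e e2 hrel i
    apply DirectSum.linearMap_ext
    intro A
    ext v
    simp only [LinearMap.comp_apply, booleanDiff, hΦ, DirectSum.toModule_lof,
      LinearMap.sum_apply, LinearMap.smul_apply, map_sum, map_smul, LinearMap.map_smul]
    rw [Finset.smul_sum]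
    congr 1
    refine Finset.sum_congr rfl fun c _ => ?_
    simp only [DirectSum.toModule_lof, LinearMap.smul_apply, smul_smul]
    congr 1
    have := hrel A.1 c.1 (Finset.mem_compl.mp c.2)
    calc (-1 : R) ^ (e A.1 (insert c.1 A.1)).val * (-1) ^ (η (insert c.1 A.1)).val
        = (-1 : R) ^ ((e A.1 (insert c.1 A.1)) + η (insert c.1 A.1)).val := by
          rw [negone_pow_val_add]
      _ = (-1 : R) ^ ((η A.1) + e2 A.1 (insert c.1 A.1)).val := by rw [this]
      _ = _ := by rw [negone_pow_val_add]
  refine ⟨Φ, Φ, hchain ε ε' ?_, hchain ε' ε ?_, hinv, hinv⟩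
  · intro A c hc
    have h1 := hη A c hc
    have h2 : ε A (insert c A) + ε A (insert c A) = 0 := CharTwo.add_self_eq_zero _
    simp only [hδdef] at h1
    linear_combination h1 + h2
  · intro A c hc
    have h1 := hη A c hc
    have h2 : ε' A (insert c A) + ε' A (insert c A) = 0 := CharTwo.add_self_eq_zero _
    simp only [hδdef] at h1
    linear_combination h1 + h2
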